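/- Let Γ be a cancellation monoid with neutral element e which carries a total ordering ≺ compatible with the monoid operation (γ₁ ≺ γ₂ implies γγ₁ ≺ γγ₂ and γ₁γ ≺ γ₂γ for all γ), such that e is the smallest element of Γ. Let A be a Γ-graded local ring and M a finitely generated Γ-graded A-module. Then for every γ ∈ Γ, any two minimal homogeneous generating sets of M contain the same number of homogeneous elements of degree γ. -/

import Mathlib

set_option linter.unusedSectionVars false
set_option maxHeartbeats 1000000

section LocalFacts
variable {S : Type*} [Ring S] [IsLocalRing S]

theorem myIsUnit_of_left_inv {w x : S} (h : w * x = 1) : IsUnit x := by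
  have hid : x * w * (x * w) = x * w := by
    rw [mul_assoc, ← mul_assoc w x, h, one_mul]
  rcases IsLocalRing.isUnit_or_isUnit_of_add_one (a := x * w) (b := 1 - x * w)
      (by noncomm_ring) with hu | hu
  · have : x * w = 1 := hu.mul_left_cancel (by rw [mul_one, hid])
    exact ⟨⟨x, w, this, h⟩, rfl⟩
  · have hi : (1 - x * w) * (1 - x * w) = (1 - x * w) * 1 := by
      rw [mul_one, sub_mul, mul_sub, mul_sub, hid, one_mul, mul_one, sub_self, sub_zero, one_mul]
    have h2 : (1:S) - x * w = 1 := hu.mul_left_cancel hi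
    have hxw : x * w = 0 := by
      have h3 : x * w = 1 - (1 - x * w) := by noncomm_ring
      rw [h2, sub_self] at h3; exact h3
    exfalso
    have hx0 : x = 0 := by
      calc x = x * (w * x) := by rw [h, mul_one]
        _ = (x * w) * x := by rw [mul_assoc]
        _ = 0 := by rw [hxw, zero_mul]
    exact zero_ne_one (by rw [← h, hx0, mul_zero] : (0:S) = 1)

theorem myIsUnit_of_right_inv {w x : S} (h : x * w = 1) : IsUnit x := by
  have hid : w * x * (w * x) = w * x := by
    rw [mul_assoc, ← mul_assoc x w, h, one_mul]
  rcases IsLocalRing.isUnit_or_isUnit_of_add_one (a := w * x) (b := 1 - w * x)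
      (by noncomm_ring) with hu | hu
  · have : w * x = 1 := hu.mul_left_cancel (by rw [mul_one, hid])
    exact ⟨⟨x, w, h, this⟩, rfl⟩
  · have hi : (1 - w * x) * (1 - w * x) = (1 - w * x) * 1 := by
      rw [mul_one, sub_mul, mul_sub, mul_sub, hid, one_mul, mul_one, sub_self, sub_zero, one_mul]
    have h2 : (1:S) - w * x = 1 := hu.mul_left_cancel hi
    have hwx : w * x = 0 := by
      have h3 : w * x = 1 - (1 - w * x) := by noncomm_ring
      rw [h2, sub_self] at h3; exact h3
    exfalso
    have hx0 : x = 0 := by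
      calc x = (x * w) * x := by rw [h, one_mul]
        _ = x * (w * x) := by rw [mul_assoc]
        _ = 0 := by rw [hwx, mul_zero]
    exact zero_ne_one (by rw [← h, hx0, zero_mul] : (0:S) = 1)

theorem myNonunit_mul_left (r : S) {x : S} (hx : ¬ IsUnit x) : ¬ IsUnit (r * x) := fun h => by
  rcases h with ⟨u, hu⟩
  exact hx <| myIsUnit_of_left_inv (w := (↑u⁻¹ : S) * r)
    (by rw [mul_assoc, ← hu, Units.inv_mul])

theorem myNonunit_mul_right (r : S) {x : S} (hx : ¬ IsUnit x) : ¬ IsUnit (x * r) := fun h => by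
  rcases h with ⟨u, hu⟩
  exact hx <| myIsUnit_of_right_inv (w := r * (↑u⁻¹ : S))
    (by rw [← mul_assoc, ← hu, Units.mul_inv])

theorem myNonunits_add {x y : S} (hx : ¬ IsUnit x) (hy : ¬ IsUnit y) : ¬ IsUnit (x + y) :=
  fun h => by
  rcases h with ⟨u, hu⟩
  have h1 : (↑u⁻¹ : S) * x + (↑u⁻¹ : S) * y = 1 := by
    rw [← mul_add, ← hu, Units.inv_mul]
  rcases IsLocalRing.isUnit_or_isUnit_of_add_one h1 with h' | h'
  · have h2 := (Units.isUnit u).mul h'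
    rw [← mul_assoc, Units.mul_inv, one_mul] at h2
    exact hx h2
  · have h2 := (Units.isUnit u).mul h'
    rw [← mul_assoc, Units.mul_inv, one_mul] at h2
    exact hy h2

/-- The residue two-sided ideal of a (possibly noncommutative) local ring. -/
def residueTSI (S : Type*) [Ring S] [IsLocalRing S] : TwoSidedIdeal S :=
  TwoSidedIdeal.mk' {x : S | ¬ IsUnit x}
    (fun h => h.ne_zero rfl |>.elim)
    (fun ha hb => myNonunits_add ha hb)
    (fun ha => by simpa using ha)
    (fun hb => myNonunit_mul_left _ hb)
    (fun ha => myNonunit_mul_right _ ha)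

theorem mem_residueTSI {x : S} : x ∈ residueTSI S ↔ ¬ IsUnit x := by
  simp [residueTSI]

/-- The residue division ring of a (possibly noncommutative) local ring. -/
abbrev ResidueDR (S : Type*) [Ring S] [IsLocalRing S] := (residueTSI S).ringCon.Quotient

noncomputable def resmk : S →+* ResidueDR S := (residueTSI S).ringCon.mk'

theorem resmk_eq_iff {x y : S} : (resmk x : ResidueDR S) = resmk y ↔ ¬ IsUnit (x - y) := by
  constructor
  · intro h
    have := (residueTSI S).ringCon.eq.mp h
    rw [TwoSidedIdeal.rel_iff, mem_residueTSI] at this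
    exact this
  · intro h
    exact (residueTSI S).ringCon.eq.mpr ((TwoSidedIdeal.rel_iff _ _ _).mpr (mem_residueTSI.mpr h))

theorem resmk_eq_zero_iff {x : S} : (resmk x : ResidueDR S) = 0 ↔ ¬ IsUnit x := by
  rw [show (0 : ResidueDR S) = resmk 0 from (map_zero _).symm, resmk_eq_iff, sub_zero]

theorem resmk_surjective : Function.Surjective (resmk : S → ResidueDR S) :=
  fun x => Quotient.inductionOn x (fun r => ⟨r, rfl⟩)

instance : Nontrivial (ResidueDR S) :=
  ⟨resmk 1, resmk 0, by
    rw [Ne, resmk_eq_iff, sub_zero, not_not]; exact isUnit_one⟩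

noncomputable instance : DivisionRing (ResidueDR S) :=
  DivisionRing.ofIsUnitOrEqZero (fun a => by
    obtain ⟨r, rfl⟩ := resmk_surjective a
    by_cases h : IsUnit r
    · exact Or.inl (h.map resmk)
    · exact Or.inr (resmk_eq_zero_iff.mpr h))

/-- nonunits of a (possibly noncommutative) local ring, as an additive subgroup. -/
def nonunitsAddSubgroup (S : Type*) [Ring S] [IsLocalRing S] : AddSubgroup S where
  carrier := {x : S | ¬ IsUnit x}
  zero_mem' := fun h => h.ne_zero rfl
  add_mem' := fun ha hb => myNonunits_add ha hb
  neg_mem' := fun ha => by simpa using ha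

end LocalFacts

section Graded
variable {Γ : Type*} [AddCancelMonoid Γ] [DecidableEq Γ]
variable {A : Type*} [Ring A] (𝒜 : Γ → AddSubgroup A) [GradedRing 𝒜]
variable {M : Type*} [AddCommGroup M] [Module A M]
  (ℳ : Γ → AddSubgroup M) [SetLike.GradedSMul 𝒜 ℳ] [DirectSum.Decomposition ℳ]

/-- Projection onto the degree `γ` component, as an `AddMonoidHom`. -/
def gproj (γ : Γ) : M →+ M :=
  ((ℳ γ).subtype).comp
    ((DFinsupp.evalAddMonoidHom γ).comp (DirectSum.decomposeAddEquiv ℳ).toAddMonoidHom)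

lemma gproj_apply (γ : Γ) (x : M) : gproj ℳ γ x = (DirectSum.decompose ℳ x γ : M) := rfl

lemma gproj_mem (γ : Γ) (x : M) : gproj ℳ γ x ∈ ℳ γ := (DirectSum.decompose ℳ x γ).2

lemma gproj_same {γ : Γ} {x : M} (h : x ∈ ℳ γ) : gproj ℳ γ x = x :=
  DirectSum.decompose_of_mem_same ℳ h

lemma gproj_ne {γ δ : Γ} {x : M} (h : x ∈ ℳ δ) (hne : δ ≠ γ) : gproj ℳ γ x = 0 := by
  rw [gproj_apply, DirectSum.decompose_of_mem_ne ℳ h hne]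

lemma gproj_smul_homog (a : A) {x : M} {δ : Γ} (hx : x ∈ ℳ δ) (γ : Γ) :
    gproj ℳ γ (a • x) = 0 ∨
      ∃ ρ : Γ, ρ + δ = γ ∧ gproj ℳ γ (a • x) = (DirectSum.decompose 𝒜 a ρ : A) • x := by
  classical
  have hsum : a • x = ∑ μ ∈ (DirectSum.decompose 𝒜 a).support,
      ((DirectSum.decompose 𝒜 a μ : A) • x) := by
    rw [← Finset.sum_smul]
    congr 1
    exact (DirectSum.sum_support_decompose 𝒜 a).symm
  have hterm : ∀ μ : Γ, (DirectSum.decompose 𝒜 a μ : A) • x ∈ ℳ (μ + δ) := fun μ =>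
    SetLike.GradedSMul.smul_mem (DirectSum.decompose 𝒜 a μ).2 hx
  by_cases hex : ∃ μ ∈ (DirectSum.decompose 𝒜 a).support, μ + δ = γ
  · obtain ⟨ρ, hρmem, hρ⟩ := hex
    right
    refine ⟨ρ, hρ, ?_⟩
    rw [hsum, map_sum]
    rw [Finset.sum_eq_single_of_mem ρ hρmem]
    · exact gproj_same ℳ (hρ ▸ hterm ρ)
    · intro μ _ hμρ
      exact gproj_ne ℳ (hterm μ) (fun h => hμρ (by exact add_right_cancel (h.trans hρ.symm)))
  · left
    rw [hsum, map_sum]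
    refine Finset.sum_eq_zero (fun μ hμ => ?_)
    exact gproj_ne ℳ (hterm μ) (fun h => hex ⟨μ, hμ, h⟩)

/-- Multiplying on the left by a degree-0 element commutes with `gproj 0` in `A`. -/
lemma gproj_mul_left_zero (r b : A) (hr : r ∈ 𝒜 0) :
    gproj 𝒜 0 (r * b) = r * gproj 𝒜 0 b := by
  classical
  have hb : b = ∑ σ ∈ (DirectSum.decompose 𝒜 b).support, (DirectSum.decompose 𝒜 b σ : A) :=
    (DirectSum.sum_support_decompose 𝒜 b).symm
  conv_lhs => rw [hb]
  conv_rhs => rw [hb]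
  rw [Finset.mul_sum, map_sum, map_sum, Finset.mul_sum]
  refine Finset.sum_congr rfl (fun σ _ => ?_)
  by_cases hσ : σ = (0:Γ)
  · subst hσ
    rw [gproj_same 𝒜 (DirectSum.decompose 𝒜 b 0).2,
        gproj_same 𝒜 (by simpa using SetLike.mul_mem_graded hr (DirectSum.decompose 𝒜 b 0).2)]
  · rw [gproj_ne 𝒜 (DirectSum.decompose 𝒜 b σ).2 hσ, mul_zero,
        gproj_ne 𝒜 (by simpa using SetLike.mul_mem_graded hr (DirectSum.decompose 𝒜 b σ).2) hσ]

lemma gproj_mul_right_zero (s b : A) (hs : s ∈ 𝒜 0) :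
    gproj 𝒜 0 (b * s) = gproj 𝒜 0 b * s := by
  classical
  have hb : b = ∑ σ ∈ (DirectSum.decompose 𝒜 b).support, (DirectSum.decompose 𝒜 b σ : A) :=
    (DirectSum.sum_support_decompose 𝒜 b).symm
  conv_lhs => rw [hb]
  conv_rhs => rw [hb]
  rw [Finset.sum_mul, map_sum, map_sum, Finset.sum_mul]
  refine Finset.sum_congr rfl (fun σ _ => ?_)
  by_cases hσ : σ = (0:Γ)
  · subst hσ
    rw [gproj_same 𝒜 (DirectSum.decompose 𝒜 b 0).2,
        gproj_same 𝒜 (by simpa using SetLike.mul_mem_graded (DirectSum.decompose 𝒜 b 0).2 hs)]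
  · rw [gproj_ne 𝒜 (DirectSum.decompose 𝒜 b σ).2 hσ, zero_mul,
        gproj_ne 𝒜 (by simpa using SetLike.mul_mem_graded (DirectSum.decompose 𝒜 b σ).2 hs) hσ]



/-- The inclusion of the degree-0 part as a ring hom. -/
def grade0Hom : ↥(𝒜 0) →+* A where
  toFun := fun r => ↑r
  map_one' := rfl
  map_mul' := fun _ _ => rfl
  map_zero' := rfl
  map_add' := fun _ _ => rfl

/-- A degree-0 element which is invertible in `A` is invertible in `𝒜 0`. -/
lemma isUnit_grade0_of_isUnit {r : ↥(𝒜 0)} (h : IsUnit (r : A)) : IsUnit r := by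
  obtain ⟨u, hu⟩ := h
  set b : A := ↑u⁻¹ with hb
  have hrb : (r : A) * b = 1 := by rw [hb, ← hu, Units.mul_inv]
  have hbr : b * (r : A) = 1 := by rw [hb, ← hu, Units.inv_mul]
  have h1 : gproj 𝒜 0 (1 : A) = 1 := gproj_same 𝒜 (SetLike.one_mem_graded 𝒜)
  have hrb0 : (r : A) * gproj 𝒜 0 b = 1 := by
    rw [← gproj_mul_left_zero 𝒜 _ _ r.2, hrb, h1]
  have hbr0 : gproj 𝒜 0 b * (r : A) = 1 := by
    rw [← gproj_mul_right_zero 𝒜 _ _ r.2, hbr, h1]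
  refine ⟨⟨r, ⟨gproj 𝒜 0 b, gproj_mem 𝒜 0 b⟩, ?_, ?_⟩, rfl⟩
  · exact Subtype.ext hrb0
  · exact Subtype.ext hbr0

variable [LinearOrder Γ]
  [CovariantClass Γ Γ (· + ·) (· < ·)]
  [CovariantClass Γ Γ (Function.swap (· + ·)) (· < ·)]

lemma add_eq_zero_parts (hΓ0 : ∀ γ : Γ, (0:Γ) ≤ γ) {a b : Γ} (h : a + b = 0) :
    a = 0 ∧ b = 0 := by
  have ha : a = 0 := by
    by_contra hne
    have h1 : (0:Γ) < a := lt_of_le_of_ne (hΓ0 a) (Ne.symm hne)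
    have h2 : (0:Γ) + b < a + b := add_lt_add_left h1 b
    rw [zero_add, h] at h2
    exact absurd h2 (not_lt.mpr (hΓ0 b))
  exact ⟨ha, by rwa [ha, zero_add] at h⟩

/-- A homogeneous element of nonzero degree is not invertible. -/
lemma not_isUnit_of_homog_ne_zero [Nontrivial A] (hΓ0 : ∀ γ : Γ, (0:Γ) ≤ γ) {a : A} {ρ : Γ}
    (ha : a ∈ 𝒜 ρ) (hρ : ρ ≠ 0) : ¬ IsUnit a := by
  classical
  intro h
  obtain ⟨u, hu⟩ := h
  set b : A := ↑u⁻¹ with hb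
  have hab : a * b = 1 := by rw [hb, ← hu, Units.mul_inv]
  have h1 : gproj 𝒜 (0:Γ) (a * b) = 1 := by
    rw [hab]; exact gproj_same 𝒜 (SetLike.one_mem_graded 𝒜)
  have h0 : gproj 𝒜 (0:Γ) (a * b) = 0 := by
    have hbsum : b = ∑ σ ∈ (DirectSum.decompose 𝒜 b).support, (DirectSum.decompose 𝒜 b σ : A) :=
      (DirectSum.sum_support_decompose 𝒜 b).symm
    rw [show a * b = ∑ σ ∈ (DirectSum.decompose 𝒜 b).support,
        a * (DirectSum.decompose 𝒜 b σ : A) by rw [← Finset.mul_sum, ← hbsum], map_sum]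
    refine Finset.sum_eq_zero (fun σ _ => ?_)
    refine gproj_ne 𝒜 (SetLike.mul_mem_graded ha (DirectSum.decompose 𝒜 b σ).2) ?_
    intro hc
    exact hρ (add_eq_zero_parts hΓ0 hc).1
  rw [h0] at h1
  exact zero_ne_one h1

variable [IsLocalRing ↥(𝒜 0)]

/-- Degree-0 component of `r * a * s` for `a` homogeneous non-invertible is a nonunit. -/
lemma gproj_triple_nonunit (hΓ0 : ∀ γ : Γ, (0:Γ) ≤ γ) (r s a : A) {μ : Γ} (ha : a ∈ 𝒜 μ)
    (hna : ¬ IsUnit a) :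
    gproj 𝒜 (0:Γ) (r * a * s) ∈
      (nonunitsAddSubgroup ↥(𝒜 0)).map (grade0Hom 𝒜).toAddMonoidHom := by
  classical
  have hrsum : r = ∑ α ∈ (DirectSum.decompose 𝒜 r).support, (DirectSum.decompose 𝒜 r α : A) :=
    (DirectSum.sum_support_decompose 𝒜 r).symm
  have hssum : s = ∑ σ ∈ (DirectSum.decompose 𝒜 s).support, (DirectSum.decompose 𝒜 s σ : A) :=
    (DirectSum.sum_support_decompose 𝒜 s).symm
  have hexp : r * a * s = ∑ α ∈ (DirectSum.decompose 𝒜 r).support,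
      ∑ σ ∈ (DirectSum.decompose 𝒜 s).support,
        (DirectSum.decompose 𝒜 r α : A) * a * (DirectSum.decompose 𝒜 s σ : A) := by
    conv_lhs => rw [hrsum, hssum]
    rw [Finset.sum_mul, Finset.sum_mul]
    exact Finset.sum_congr rfl (fun α _ => Finset.mul_sum _ _ _)
  rw [hexp, map_sum]
  refine AddSubgroup.sum_mem _ (fun α _ => ?_)
  rw [map_sum]
  refine AddSubgroup.sum_mem _ (fun σ _ => ?_)
  set rα : A := (DirectSum.decompose 𝒜 r α : A)
  set sσ : A := (DirectSum.decompose 𝒜 s σ : A)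
  have hmem : rα * a * sσ ∈ 𝒜 (α + μ + σ) :=
    SetLike.mul_mem_graded (SetLike.mul_mem_graded (DirectSum.decompose 𝒜 r α).2 ha)
      (DirectSum.decompose 𝒜 s σ).2
  by_cases hz : α + μ + σ = 0
  · obtain ⟨hαμ, hσ⟩ := add_eq_zero_parts hΓ0 hz
    obtain ⟨hα, hμ⟩ := add_eq_zero_parts hΓ0 hαμ
    have hrα : rα ∈ 𝒜 0 := hα ▸ (DirectSum.decompose 𝒜 r α).2
    have hsσ : sσ ∈ 𝒜 0 := hσ ▸ (DirectSum.decompose 𝒜 s σ).2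
    have ha0 : a ∈ 𝒜 0 := hμ ▸ ha
    rw [gproj_same 𝒜 (by rwa [hz] at hmem)]
    refine ⟨(⟨rα, hrα⟩ : ↥(𝒜 0)) * ⟨a, ha0⟩ * ⟨sσ, hsσ⟩, ?_, rfl⟩
    have hna' : ¬ IsUnit (⟨a, ha0⟩ : ↥(𝒜 0)) := fun h => hna (h.map (grade0Hom 𝒜))
    exact myNonunit_mul_right _ (myNonunit_mul_left _ hna')
  · rw [gproj_ne 𝒜 hmem hz]
    exact zero_mem _


/-- Homogeneous non-invertible elements. -/
def badSet : Set A := {a : A | (∃ μ, a ∈ 𝒜 μ) ∧ ¬ IsUnit a}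

/-- The submodule `𝔐 M` generated by bad-homogeneous multiples. -/
def NSub : Submodule A M :=
  Submodule.span A {y : M | ∃ a ∈ badSet 𝒜, ∃ x : M, (∃ δ, x ∈ ℳ δ) ∧ y = a • x}

lemma smul_mem_NSub {a : A} (hab : a ∈ badSet 𝒜) (x : M) : a • x ∈ NSub 𝒜 ℳ := by
  classical
  have hx : x = ∑ δ ∈ (DirectSum.decompose ℳ x).support, (DirectSum.decompose ℳ x δ : M) :=
    (DirectSum.sum_support_decompose ℳ x).symm
  rw [hx, Finset.smul_sum]
  refine Submodule.sum_mem _ (fun δ _ => Submodule.subset_span ?_)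
  exact ⟨a, hab, _, ⟨δ, (DirectSum.decompose ℳ x δ).2⟩, rfl⟩

include 𝒜 in
set_option maxHeartbeats 1000000 in
lemma span_proj_mem {S : Set M} (hS : ∀ s ∈ S, ∃ δ, s ∈ ℳ δ) {x : M}
    (hx : x ∈ Submodule.span A S) (γ : Γ) : gproj ℳ γ x ∈ Submodule.span A S := by
  classical
  revert γ
  refine Submodule.span_induction (p := fun x _ => ∀ γ, gproj ℳ γ x ∈ Submodule.span A S)
    ?_ ?_ ?_ ?_ hx
  · intro s hs γ
    obtain ⟨δ, hδ⟩ := hS s hs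
    by_cases h : δ = γ
    · rw [gproj_same ℳ (h ▸ hδ)]; exact Submodule.subset_span hs
    · rw [gproj_ne ℳ hδ h]; exact Submodule.zero_mem _
  · intro γ; rw [map_zero]; exact Submodule.zero_mem _
  · intro y z _ _ hy hz γ; rw [map_add]; exact Submodule.add_mem _ (hy γ) (hz γ)
  · intro a y _ ih γ
    have hy : y = ∑ δ ∈ (DirectSum.decompose ℳ y).support, (DirectSum.decompose ℳ y δ : M) :=
      (DirectSum.sum_support_decompose ℳ y).symm
    rw [show a • y = ∑ δ ∈ (DirectSum.decompose ℳ y).support,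
        a • (DirectSum.decompose ℳ y δ : M) by rw [← Finset.smul_sum, ← hy], map_sum]
    refine Submodule.sum_mem _ (fun δ _ => ?_)
    rcases gproj_smul_homog 𝒜 ℳ a (DirectSum.decompose ℳ y δ).2 γ with h0 | ⟨ρ, _, heq⟩
    · rw [h0]; exact Submodule.zero_mem _
    · rw [heq]
      refine Submodule.smul_mem _ _ ?_
      have := ih δ
      rwa [gproj_apply] at this

set_option maxHeartbeats 1000000 in
/-- Graded Nakayama lemma. -/
lemma graded_nakayama (hΓ0 : ∀ γ : Γ, (0:Γ) ≤ γ) (S : Set M) (hS : ∀ s ∈ S, ∃ δ, s ∈ ℳ δ)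
    (T : Finset M) (hT : ∀ t ∈ T, ∃ δ, t ∈ ℳ δ)
    (hgen : Submodule.span A S ⊔ Submodule.span A (T : Set M) = ⊤)
    (hsub : ∀ t ∈ T, t ∈ Submodule.span A S ⊔ NSub 𝒜 ℳ) :
    Submodule.span A S = ⊤ := by
  classical
  revert hT hgen hsub
  induction T using Finset.strongInduction with
  | _ T ih =>
  intro hT hgen hsub
  rcases T.eq_empty_or_nonempty with rfl | hne
  · rw [Finset.coe_empty, Submodule.span_empty, sup_bot_eq] at hgen
    exact hgen
  by_cases hzero : (0:M) ∈ T
  · refine ih (T.erase 0) (Finset.erase_ssubset hzero) (fun t ht => hT t (Finset.mem_of_mem_erase ht))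
      ?_ (fun t ht => hsub t (Finset.mem_of_mem_erase ht))
    rw [Finset.coe_erase]
    have : Submodule.span A ((T : Set M) \ {0}) = Submodule.span A (T : Set M) := by
      conv_rhs => rw [show (T : Set M) = insert 0 ((T : Set M) \ {0}) by
        rw [Set.insert_diff_singleton, Set.insert_eq_self.mpr (by exact_mod_cast hzero)]]
      rw [Submodule.span_insert_zero]
    rw [this]; exact hgen
  -- degree function
  set dG : M → Γ := fun x => if h : ∃ δ, x ∈ ℳ δ then h.choose else 0 with hdG
  have hdeg : ∀ t ∈ T, t ∈ ℳ (dG t) := by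
    intro t ht
    have h := hT t ht
    simp only [hdG, dif_pos h]
    exact h.choose_spec
  obtain ⟨t0, ht0T, ht0min⟩ := T.exists_min_image dG hne
  set δ0 : Γ := dG t0 with hδ0
  set J₀A : AddSubgroup A := (nonunitsAddSubgroup ↥(𝒜 0)).map (grade0Hom 𝒜).toAddMonoidHom
    with hJ₀A
  -- Step A : NSub ≤ span S ⊔ N''
  set gen2 : Set M := {y : M | ∃ c : A, (∃ a ∈ badSet 𝒜, ∃ rr : A, c = a * rr) ∧
      ∃ t ∈ T, y = c • t} with hgen2
  have stepA : NSub 𝒜 ℳ ≤ Submodule.span A S ⊔ Submodule.span A gen2 := by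
    rw [NSub, Submodule.span_le]
    rintro y ⟨a, hab, x, _, rfl⟩
    have hx : x ∈ Submodule.span A (S ∪ (T : Set M)) := by
      rw [Submodule.span_union, hgen]; exact Submodule.mem_top
    obtain ⟨n, f, g, hfg⟩ := Submodule.mem_span_set'.mp hx
    rw [← hfg, Finset.smul_sum]
    refine Submodule.sum_mem _ (fun i _ => ?_)
    rw [smul_smul]
    rcases (g i).2 with hgS | hgT
    · apply Submodule.mem_sup_left
      exact Submodule.smul_mem _ _ (Submodule.subset_span hgS)
    · apply Submodule.mem_sup_right
      apply Submodule.subset_span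
      exact ⟨a * f i, ⟨a, hab, f i, rfl⟩, (g i : M), hgT, rfl⟩
  -- t0 in span S ⊔ span gen2
  have hB : t0 ∈ Submodule.span A S ⊔ Submodule.span A gen2 := by
    have := hsub t0 ht0T
    refine Set.mem_of_mem_of_subset this ?_
    exact sup_le le_sup_left stepA
  rw [← Submodule.span_union] at hB
  obtain ⟨n, f, g, hfg⟩ := Submodule.mem_span_set'.mp hB
  have ht0sum : t0 = ∑ i : Fin n, gproj ℳ δ0 (f i • (g i : M)) := by
    rw [← map_sum, hfg, gproj_same ℳ (hdeg t0 ht0T)]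
  -- per-term analysis
  have hchoice : ∀ i : Fin n, ∃ (e : A) (u : M), e ∈ J₀A ∧ u ∈ T ∧
      gproj ℳ δ0 (f i • (g i : M)) - e • u ∈ Submodule.span A S := by
    intro i
    rcases (g i).2 with hgS | hgT
    · refine ⟨0, t0, zero_mem _, ht0T, ?_⟩
      rw [zero_smul, sub_zero]
      exact span_proj_mem 𝒜 ℳ hS (Submodule.smul_mem _ _ (Submodule.subset_span hgS)) δ0
    · obtain ⟨c, ⟨a, hab, rr, rfl⟩, t', ht'T, hgi⟩ := hgT
      have hfix : f i • (g i : M) = (f i * a * rr) • t' := by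
        rw [hgi, smul_smul, mul_assoc]
      rcases gproj_smul_homog 𝒜 ℳ (f i * a * rr) (hdeg t' ht'T) δ0 with h0 | ⟨ρ, hρ, heq⟩
      · refine ⟨0, t0, zero_mem _, ht0T, ?_⟩
        rw [hfix, h0, zero_smul, sub_zero]
        exact Submodule.zero_mem _
      · -- ρ + dG t' = δ0, δ0 ≤ dG t' forces ρ = 0 and dG t' = δ0
        have hle : δ0 ≤ dG t' := ht0min t' ht'T
        have hρ0 : ρ = 0 := by
          by_contra hne'
          have h1 : (0:Γ) < ρ := lt_of_le_of_ne (hΓ0 ρ) (Ne.symm hne')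
          have h2 : (0:Γ) + dG t' < ρ + dG t' := add_lt_add_left h1 _
          rw [zero_add, hρ] at h2
          exact absurd (lt_of_lt_of_le h2 hle) (lt_irrefl _)
        have he : (DirectSum.decompose 𝒜 (f i * a * rr) ρ : A) ∈ J₀A := by
          rw [hρ0]
          obtain ⟨⟨μ, haμ⟩, hanu⟩ := hab
          exact gproj_triple_nonunit 𝒜 hΓ0 (f i) rr a haμ hanu
        refine ⟨_, t', he, ht'T, ?_⟩
        rw [hfix, heq, sub_self]
        exact Submodule.zero_mem _
  choose e u he hu hspan using hchoice
  -- regroup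
  set F : Finset (Fin n) := Finset.univ.filter (fun i => u i = t0) with hF
  set etot : A := ∑ i ∈ F, e i with hetot
  have hetotJ : etot ∈ J₀A := AddSubgroup.sum_mem _ (fun i _ => he i)
  have hkey : (1 - etot) • t0 ∈ Submodule.span A S ⊔ Submodule.span A ((T.erase t0 : Finset M) : Set M) := by
    have hsplit : ∑ i : Fin n, e i • u i
        = etot • t0 + ∑ i ∈ Finset.univ.filter (fun i => ¬ (u i = t0)), e i • u i := by
      rw [hetot, Finset.sum_smul]
      rw [← Finset.sum_filter_add_sum_filter_not Finset.univ (fun i => u i = t0) (fun i => e i • u i)]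
      congr 1
      refine Finset.sum_congr rfl (fun i hi => ?_)
      rw [(Finset.mem_filter.mp hi).2]
    have hmain : t0 - ∑ i : Fin n, e i • u i ∈ Submodule.span A S := by
      rw [ht0sum, ← Finset.sum_sub_distrib]
      exact Submodule.sum_mem _ (fun i _ => hspan i)
    have hrest : ∑ i ∈ Finset.univ.filter (fun i => ¬ (u i = t0)), e i • u i
        ∈ Submodule.span A ((T.erase t0 : Finset M) : Set M) := by
      refine Submodule.sum_mem _ (fun i hi => ?_)
      refine Submodule.smul_mem _ _ (Submodule.subset_span ?_)
      rw [Finset.coe_erase]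
      exact ⟨hu i, (Finset.mem_filter.mp hi).2⟩
    have : (1 - etot) • t0 = (t0 - ∑ i : Fin n, e i • u i)
        + ∑ i ∈ Finset.univ.filter (fun i => ¬ (u i = t0)), e i • u i := by
      rw [sub_smul, one_smul, hsplit]
      abel
    rw [this]
    exact Submodule.add_mem _ (Submodule.mem_sup_left hmain) (Submodule.mem_sup_right hrest)
  -- invert 1 - etot
  obtain ⟨re, hre, hrecoe⟩ := hetotJ
  have hre' : ¬ IsUnit re := hre
  have hunit : IsUnit ((1:↥(𝒜 0)) - re) := by
    rcases IsLocalRing.isUnit_or_isUnit_of_add_one (a := re) (b := 1 - re) (by abel) with h | h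
    · exact absurd h hre'
    · exact h
  obtain ⟨w, hw⟩ := hunit
  have hcoe1 : ((1 - etot : A)) = ((((1:↥(𝒜 0)) - re) : ↥(𝒜 0)) : A) := by
    have : (re : A) = etot := hrecoe
    push_cast
    rw [this]
  have ht0mem : t0 ∈ Submodule.span A S ⊔ Submodule.span A ((T.erase t0 : Finset M) : Set M) := by
    have h2 := Submodule.smul_mem _ ((((w⁻¹ : _) : ↥(𝒜 0)) : A)) hkey
    rw [hcoe1, smul_smul] at h2
    have h3 : (((w⁻¹ : _) : ↥(𝒜 0)) : A) * ((((1:↥(𝒜 0)) - re) : ↥(𝒜 0)) : A) = 1 := by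
      rw [← hw]
      calc (((w⁻¹ : (↥(𝒜 0))ˣ) : ↥(𝒜 0)) : A) * (((w : (↥(𝒜 0))ˣ) : ↥(𝒜 0)) : A)
          = (((((w⁻¹ : (↥(𝒜 0))ˣ) : ↥(𝒜 0)) * ((w : (↥(𝒜 0))ˣ) : ↥(𝒜 0))) : ↥(𝒜 0)) : A) := rfl
        _ = (((1 : ↥(𝒜 0))) : A) := by rw [Units.inv_mul]
        _ = 1 := rfl
    rw [h3, one_smul] at h2
    exact h2
  -- conclude by induction on T.erase t0
  refine ih (T.erase t0) (Finset.erase_ssubset ht0T)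
    (fun t ht => hT t (Finset.mem_of_mem_erase ht)) ?_
    (fun t ht => hsub t (Finset.mem_of_mem_erase ht))
  refine le_antisymm le_top ?_
  rw [← hgen]
  refine sup_le le_sup_left ?_
  rw [Submodule.span_le]
  intro t ht
  by_cases h : t = t0
  · rw [h]; exact ht0mem
  · apply Submodule.mem_sup_right
    apply Submodule.subset_span
    rw [Finset.coe_erase]
    exact ⟨ht, h⟩


lemma nonunit_smul_quot_eq_zero (r : ↥(𝒜 0)) (hr : ¬ IsUnit r) (v : M ⧸ NSub 𝒜 ℳ) :
    (r : A) • v = 0 := by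
  obtain ⟨m, rfl⟩ := Submodule.Quotient.mk_surjective _ v
  rw [← Submodule.Quotient.mk_smul, Submodule.Quotient.mk_eq_zero]
  exact smul_mem_NSub 𝒜 ℳ ⟨⟨0, r.2⟩, fun h => hr (isUnit_grade0_of_isUnit 𝒜 h)⟩ m

/-- The residue division ring acts on `M ⧸ NSub`. -/
noncomputable def quotModk : Module (ResidueDR ↥(𝒜 0)) (M ⧸ NSub 𝒜 ℳ) := by
  classical
  have wd : ∀ (v : M ⧸ NSub 𝒜 ℳ) (r s : ↥(𝒜 0)),
      (residueTSI ↥(𝒜 0)).ringCon r s → (r : A) • v = (s : A) • v := by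
    intro v r s h
    have hnu : ¬ IsUnit (r - s) := mem_residueTSI.mp ((TwoSidedIdeal.rel_iff _ _ _).mp h)
    have h1 : ((r - s : ↥(𝒜 0)) : A) • v = 0 := nonunit_smul_quot_eq_zero 𝒜 ℳ _ hnu v
    have h2 : ((r - s : ↥(𝒜 0)) : A) = (r : A) - (s : A) := rfl
    rw [h2, sub_smul, sub_eq_zero] at h1
    exact h1
  refine
  { smul := fun c v => Quotient.liftOn c (fun r => (r : A) • v) (fun r s h => wd v r s h)
    one_smul := ?one_smul
    mul_smul := ?mul_smul
    smul_zero := ?smul_zero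
    smul_add := ?smul_add
    add_smul := ?add_smul
    zero_smul := ?zero_smul }
  case one_smul =>
    intro v
    show ((1 : ↥(𝒜 0)) : A) • v = v
    rw [show ((1 : ↥(𝒜 0)) : A) = 1 from rfl, one_smul]
  case mul_smul =>
    intro c d v
    obtain ⟨r, rfl⟩ := resmk_surjective c
    obtain ⟨s, rfl⟩ := resmk_surjective d
    show ((r * s : ↥(𝒜 0)) : A) • v = (r : A) • ((s : A) • v)
    rw [show ((r * s : ↥(𝒜 0)) : A) = (r : A) * (s : A) from rfl, mul_smul]
  case smul_zero =>
    intro c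
    obtain ⟨r, rfl⟩ := resmk_surjective c
    show (r : A) • (0 : M ⧸ NSub 𝒜 ℳ) = 0
    rw [smul_zero]
  case smul_add =>
    intro c v w
    obtain ⟨r, rfl⟩ := resmk_surjective c
    show (r : A) • (v + w) = (r : A) • v + (r : A) • w
    rw [smul_add]
  case add_smul =>
    intro c d v
    obtain ⟨r, rfl⟩ := resmk_surjective c
    obtain ⟨s, rfl⟩ := resmk_surjective d
    show ((r + s : ↥(𝒜 0)) : A) • v = (r : A) • v + (s : A) • v
    rw [show ((r + s : ↥(𝒜 0)) : A) = (r : A) + (s : A) from rfl, add_smul]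
  case zero_smul =>
    intro v
    show ((0 : ↥(𝒜 0)) : A) • v = 0
    rw [show ((0 : ↥(𝒜 0)) : A) = 0 from rfl, zero_smul]

end Graded

/-- A minimal generating set of a finitely generated module is finite. -/
lemma minimal_gen_finite {A : Type*} [Ring A] {M : Type*} [AddCommGroup M] [Module A M]
    [Module.Finite A M] (Ω : Set M) (hgen : Submodule.span A Ω = ⊤)
    (hmin : ∀ S ⊂ Ω, Submodule.span A S ≠ ⊤) : Ω.Finite := by
  classical
  have hcomp := (Submodule.fg_iff_compact (⊤ : Submodule A M)).mp Module.Finite.fg_top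
  have hle : (⊤ : Submodule A M) ≤ ⨆ x : Ω, Submodule.span A {(x : M)} := by
    rw [← hgen, Submodule.span_eq_iSup_of_singleton_spans]
    rw [iSup_subtype']
  obtain ⟨s, hs⟩ := CompleteLattice.IsCompactElement.exists_finset_of_le_iSup _ hcomp _ hle
  set S0 : Set M := ↑(s.image (fun x : Ω => (x : M))) with hS0
  have hS0sub : S0 ⊆ Ω := by
    intro y hy
    rw [hS0] at hy
    simp only [Finset.coe_image, Set.mem_image, Finset.mem_coe] at hy
    obtain ⟨x, _, rfl⟩ := hy
    exact x.2
  have hS0gen : Submodule.span A S0 = ⊤ := by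
    refine le_antisymm le_top (le_trans hs ?_)
    refine iSup_le (fun x => iSup_le (fun hx => ?_))
    rw [Submodule.span_le, Set.singleton_subset_iff]
    refine Submodule.subset_span ?_
    rw [hS0]
    simp only [Finset.coe_image, Set.mem_image, Finset.mem_coe]
    exact ⟨x, hx, rfl⟩
  have heq : Ω = S0 := by
    by_contra h
    exact hmin S0 (ssubset_of_subset_of_ne hS0sub (Ne.symm h)) hS0gen
  rw [heq]
  exact (s.image _).finite_toSet

set_option maxHeartbeats 3000000 in
set_option synthInstance.maxHeartbeats 1000000 in
/-- **Theorem 3.4(ii).**  Let `Γ` be a cancellation monoid (written additively) carrying a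
total order compatible with the monoid operation on both sides, such that the neutral
element `0` is the smallest element of `Γ`.  Let `A` be a `Γ`-graded local ring (i.e. the
degree-`0` part `A_0` is a local ring in the classical sense) and `M` a finitely generated
`Γ`-graded `A`-module.  Then for every `γ ∈ Γ`, any two minimal homogeneous generating
sets of `M` contain the same number of homogeneous elements of degree `γ`. -/
theorem minimal_homogeneous_generating_sets_same_number_in_each_degree
    {Γ : Type*} [AddCancelMonoid Γ] [LinearOrder Γ] [DecidableEq Γ]
    [CovariantClass Γ Γ (· + ·) (· < ·)]
    [CovariantClass Γ Γ (Function.swap (· + ·)) (· < ·)]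
    (h0 : ∀ γ : Γ, 0 ≤ γ)
    {A : Type*} [Ring A] (𝒜 : Γ → AddSubgroup A) [GradedRing 𝒜]
    [IsLocalRing (𝒜 0)]
    {M : Type*} [AddCommGroup M] [Module A M] [Module.Finite A M]
    (ℳ : Γ → AddSubgroup M) [SetLike.GradedSMul 𝒜 ℳ] [DirectSum.Decomposition ℳ]
    (Ω₁ Ω₂ : Set M)
    (hΩ₁hom : ∀ x ∈ Ω₁, x ≠ 0 ∧ ∃ γ : Γ, x ∈ ℳ γ)
    (hΩ₁gen : Submodule.span A Ω₁ = ⊤)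
    (hΩ₁min : ∀ S ⊂ Ω₁, Submodule.span A S ≠ ⊤)
    (hΩ₂hom : ∀ x ∈ Ω₂, x ≠ 0 ∧ ∃ γ : Γ, x ∈ ℳ γ)
    (hΩ₂gen : Submodule.span A Ω₂ = ⊤)
    (hΩ₂min : ∀ S ⊂ Ω₂, Submodule.span A S ≠ ⊤) :
    ∀ γ : Γ, {x ∈ Ω₁ | x ∈ ℳ γ}.ncard = {x ∈ Ω₂ | x ∈ ℳ γ}.ncard := by

  classical
  intro γ
  haveI : Nontrivial A :=
    ⟨1, 0, fun h => one_ne_zero (α := ↥(𝒜 0)) (Subtype.ext h)⟩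
  letI kMod : Module (ResidueDR ↥(𝒜 0)) (M ⧸ NSub 𝒜 ℳ) := quotModk 𝒜 ℳ
  set mkf : M → M ⧸ NSub 𝒜 ℳ := fun m => Submodule.Quotient.mk m with hmkf
  have hsmulk : ∀ (r : ↥(𝒜 0)) (v : M ⧸ NSub 𝒜 ℳ), (resmk r) • v = (r : A) • v :=
    fun _ _ => rfl
  -- the key claim, proved uniformly for any minimal homogeneous generating set
  have key : ∀ (Ω : Set M), (∀ x ∈ Ω, x ≠ 0 ∧ ∃ γ' : Γ, x ∈ ℳ γ') →
      Submodule.span A Ω = ⊤ → (∀ S ⊂ Ω, Submodule.span A S ≠ ⊤) →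
      Nonempty (Module.Basis {x ∈ Ω | x ∈ ℳ γ} (ResidueDR ↥(𝒜 0))
        (Submodule.span (ResidueDR ↥(𝒜 0)) (mkf '' ((ℳ γ : Set M))))) := by
    intro Ω hhom hgen hmin
    have hΩfin : Ω.Finite := minimal_gen_finite Ω hgen hmin
    set X : Set M := {x ∈ Ω | x ∈ ℳ γ} with hX
    have hXfin : X.Finite := hΩfin.subset (Set.sep_subset _ _)
    haveI : Fintype X := hXfin.fintype
    set fam : X → M ⧸ NSub 𝒜 ℳ := fun x => mkf (x : M) with hfam
    -- independence
    have hind : LinearIndependent (ResidueDR ↥(𝒜 0)) fam := by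
      rw [Fintype.linearIndependent_iff]
      intro g hg x0
      set gr : X → ↥(𝒜 0) := fun x => (resmk_surjective (g x)).choose with hgrdef
      have hgr : ∀ x : X, resmk (gr x) = g x := fun x => (resmk_surjective (g x)).choose_spec
      by_contra hne
      have hun : IsUnit (gr x0) := by
        by_contra h
        exact hne ((hgr x0).symm.trans (resmk_eq_zero_iff.mpr h))
      -- get the relation in M
      have hsum2 : ∑ x : X, ((gr x : A)) • (fam x) = 0 := by
        rw [← hg]
        exact Finset.sum_congr rfl (fun x _ => by rw [← hgr x, hsmulk])
      set w : M := ∑ x : X, ((gr x : A)) • (x : M) with hw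
      have hwN : w ∈ NSub 𝒜 ℳ := by
        rw [← Submodule.Quotient.mk_eq_zero]
        have : (Submodule.Quotient.mk w : M ⧸ NSub 𝒜 ℳ) = ∑ x : X, ((gr x : A)) • (fam x) := by
          rw [hw, show (Submodule.Quotient.mk (∑ x : X, ((gr x : A)) • (x : M)) : M ⧸ NSub 𝒜 ℳ)
            = (NSub 𝒜 ℳ).mkQ (∑ x : X, ((gr x : A)) • (x : M)) from rfl, map_sum]
          refine Finset.sum_congr rfl (fun x _ => ?_)
          exact map_smul ((NSub 𝒜 ℳ).mkQ) _ _
        rw [this, hsum2]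
      -- isolate x0
      have hsplit : ((gr x0 : A)) • (x0 : M) = w - ∑ x ∈ Finset.univ.erase x0, ((gr x : A)) • (x : M) := by
        rw [eq_sub_iff_add_eq, hw]
        exact Finset.add_sum_erase Finset.univ (fun x : X => ((gr x : A)) • (x : M))
          (Finset.mem_univ x0)
      obtain ⟨u, huval⟩ := hun
      have hx0mem : (x0 : M) ∈ Submodule.span A (Ω \ {(x0 : M)}) ⊔ NSub 𝒜 ℳ := by
        have hrest : ∑ x ∈ Finset.univ.erase x0, ((gr x : A)) • (x : M)
            ∈ Submodule.span A (Ω \ {(x0 : M)}) := by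
          refine Submodule.sum_mem _ (fun x hx => Submodule.smul_mem _ _ (Submodule.subset_span ?_))
          refine ⟨x.2.1, ?_⟩
          simp only [Set.mem_singleton_iff]
          exact fun hcoe => (Finset.mem_erase.mp hx).1 (Subtype.coe_injective hcoe)
        have hin : ((gr x0 : A)) • (x0 : M) ∈ Submodule.span A (Ω \ {(x0 : M)}) ⊔ NSub 𝒜 ℳ := by
          rw [hsplit]
          exact Submodule.sub_mem _ (Submodule.mem_sup_right hwN) (Submodule.mem_sup_left hrest)
        have h2 := Submodule.smul_mem _ ((((u⁻¹ : _) : ↥(𝒜 0)) : A)) hin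
        rw [smul_smul] at h2
        have h3 : (((u⁻¹ : _) : ↥(𝒜 0)) : A) * ((gr x0 : A)) = 1 := by
          rw [← huval]
          calc (((u⁻¹ : _) : ↥(𝒜 0)) : A) * (((u : _) : ↥(𝒜 0)) : A)
              = ((((u⁻¹ : _) * (u : _) : ↥(𝒜 0))) : A) := rfl
            _ = (((1 : ↥(𝒜 0))) : A) := by rw [Units.inv_mul]
            _ = 1 := rfl
        rw [h3, one_smul] at h2
        exact h2
      -- Nakayama contradiction
      have hS : ∀ s ∈ Ω \ {(x0 : M)}, ∃ δ, s ∈ ℳ δ := fun s hs => (hhom s hs.1).2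
      have htop : Submodule.span A (Ω \ {(x0 : M)}) = ⊤ := by
        refine graded_nakayama 𝒜 ℳ h0 _ hS hΩfin.toFinset
          (fun t ht => (hhom t (hΩfin.mem_toFinset.mp ht)).2) ?_ ?_
        · rw [Set.Finite.coe_toFinset]
          refine le_antisymm le_top ?_
          rw [← hgen]
          exact le_sup_right.trans (le_of_eq rfl)
        · intro t ht
          rw [Set.Finite.mem_toFinset] at ht
          by_cases h : t = (x0 : M)
          · rw [h]; exact hx0mem
          · exact Submodule.mem_sup_left (Submodule.subset_span ⟨ht, h⟩)
      exact hmin _ (Set.sdiff_singleton_ssubset.mpr x0.2.1) htop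
    -- spanning
    have hsp : ∀ v ∈ ℳ γ, mkf v ∈ Submodule.span (ResidueDR ↥(𝒜 0)) (mkf '' X) := by
      intro v hv
      have hvtop : v ∈ Submodule.span A Ω := by rw [hgen]; exact Submodule.mem_top
      obtain ⟨n, f, g, hfg⟩ := Submodule.mem_span_set'.mp hvtop
      have hvproj : v = ∑ i : Fin n, gproj ℳ γ (f i • ((g i : M))) := by
        rw [← map_sum, hfg, gproj_same ℳ hv]
      have hmk : mkf v = ∑ i : Fin n, mkf (gproj ℳ γ (f i • ((g i : M)))) := by
        rw [hvproj, show mkf (∑ i : Fin n, gproj ℳ γ (f i • ((g i : M))))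
          = (NSub 𝒜 ℳ).mkQ (∑ i : Fin n, gproj ℳ γ (f i • ((g i : M)))) from rfl, map_sum]
        rfl
      rw [hmk]
      refine Submodule.sum_mem _ (fun i _ => ?_)
      obtain ⟨δi, hδi⟩ := (hhom _ (g i).2).2
      rcases gproj_smul_homog 𝒜 ℳ (f i) hδi γ with hzero | ⟨ρ, hρ, heq⟩
      · have hmz : mkf (0 : M) = 0 := Submodule.Quotient.mk_zero _
        rw [hzero, hmz]
        exact Submodule.zero_mem _
      · by_cases hρ0 : ρ = 0
        · subst hρ0
          have hδγ : δi = γ := by rw [zero_add] at hρ; exact hρ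
          rw [heq]
          have hc : mkf ((DirectSum.decompose 𝒜 (f i) (0:Γ) : A) • ((g i : M)))
              = (resmk (DirectSum.decompose 𝒜 (f i) (0:Γ))) • mkf ((g i : M)) := by
            rw [hsmulk, hmkf]
            exact Submodule.Quotient.mk_smul _ _ _
          rw [hc]
          refine Submodule.smul_mem _ _ (Submodule.subset_span ?_)
          exact ⟨(g i : M), ⟨(g i).2, hδγ ▸ hδi⟩, rfl⟩
        · have hmem : (DirectSum.decompose 𝒜 (f i) ρ : A) • ((g i : M)) ∈ NSub 𝒜 ℳ := by
            refine smul_mem_NSub 𝒜 ℳ (a := (DirectSum.decompose 𝒜 (f i) ρ : A))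
              ⟨⟨ρ, (DirectSum.decompose 𝒜 (f i) ρ).2⟩, ?_⟩ ((g i : M))
            exact not_isUnit_of_homog_ne_zero 𝒜 h0 (DirectSum.decompose 𝒜 (f i) ρ).2 hρ0
          have hz2 : mkf ((DirectSum.decompose 𝒜 (f i) ρ : A) • ((g i : M))) = 0 :=
            (Submodule.Quotient.mk_eq_zero _).mpr hmem
          rw [heq, hz2]
          exact Submodule.zero_mem _
    -- range of the family spans exactly span (mkf '' ℳ γ)
    have hsprange : Submodule.span (ResidueDR ↥(𝒜 0)) (Set.range fam)
        = Submodule.span (ResidueDR ↥(𝒜 0)) (mkf '' ((ℳ γ : Set M))) := by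
      refine le_antisymm ?_ ?_
      · rw [Submodule.span_le]
        rintro _ ⟨x, rfl⟩
        exact Submodule.subset_span ⟨(x : M), x.2.2, rfl⟩
      · rw [Submodule.span_le]
        rintro _ ⟨v, hv, rfl⟩
        have := hsp v hv
        rwa [Set.image_eq_range mkf X] at this
    exact ⟨(Module.Basis.span hind).map (LinearEquiv.ofEq _ _ hsprange)⟩
  obtain ⟨b₁⟩ := key Ω₁ hΩ₁hom hΩ₁gen hΩ₁min
  obtain ⟨b₂⟩ := key Ω₂ hΩ₂hom hΩ₂gen hΩ₂min
  have hmk := mk_eq_mk_of_basis b₁ b₂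
  rw [Cardinal.lift_inj] at hmk
  have e := Classical.choice (Cardinal.eq.mp hmk)
  rw [← Nat.card_coe_set_eq, ← Nat.card_coe_set_eq]
  exact Nat.card_congr e
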